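/- Fix an integer N ≥ 1, rates λ > 0, ν_m > 0, ν_r > 0 and ν_0,…,ν_{N−1} ≥ 0. Let K := {0,1,…,N−1} ∪ {b_m, b_r} and define the K×K matrix Q̃ by: Q̃(k,k) = −(ν_k + λ) and Q̃(k,k+1) = λ and Q̃(k,b_r) = ν_k for 0 ≤ k ≤ N−2; Q̃(N−1,N−1) = −(ν_{N−1}+λ), Q̃(N−1,b_m) = λ, Q̃(N−1,b_r) = ν_{N−1}; Q̃(b_m,0) = ν_m, Q̃(b_m,b_m) = −ν_m; Q̃(b_r,0) = ν_r, Q̃(b_r,b_r) = −ν_r; all other entries equal 0. Define the row vector θ by θ(0) := 1, θ(k) := ∏_{i=1}^{k} λ/(ν_i + λ) for 1 ≤ k ≤ N−1, θ(b_m) := (λ/ν_m)·θ(N−1), and θ(b_r) := ((ν_0+λ)/ν_r) − (ν_m/ν_r)·θ(b_m). Then θ·Q̃ = 0, i.e. Σ_{k∈K} θ(k)·Q̃(k,m) = 0 for every m ∈ K; thus θ (after normalization) is the stationary environment distribution of the M/M/1 unreliable loss system with service counter, maintenance rate ν_m, repair rate ν_r and failure rates ν_k. -/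

import Mathlib

/-- The explicit row vector θ satisfies θ·Q̃ = 0 for the M/M/1 unreliable
loss system with service counter (states 0,…,N−1), maintenance state b_m = N and
repair state b_r = N+1. -/
theorem stmt_6 (N : ℕ) (hN : 1 ≤ N)
    (lam num nur : ℝ) (hlam : 0 < lam) (hnum : 0 < num) (hnur : 0 < nur)
    (nu : ℕ → ℝ) (hnu : ∀ k, k < N → 0 ≤ nu k)
    (Q : ℕ → ℕ → ℝ)
    (hQ_diag : ∀ k, k < N → Q k k = -(nu k + lam))
    (hQ_up : ∀ k, k < N → Q k (k + 1) = lam)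
    (hQ_fail : ∀ k, k < N → Q k (N + 1) = nu k)
    (hQ_zero : ∀ k m, k < N → m ≠ k → m ≠ k + 1 → m ≠ N + 1 → Q k m = 0)
    (hQ_m0 : Q N 0 = num) (hQ_mm : Q N N = -num)
    (hQ_mz : ∀ m, m ≠ 0 → m ≠ N → Q N m = 0)
    (hQ_r0 : Q (N + 1) 0 = nur) (hQ_rr : Q (N + 1) (N + 1) = -nur)
    (hQ_rz : ∀ m, m ≠ 0 → m ≠ N + 1 → Q (N + 1) m = 0)
    (θ : ℕ → ℝ)
    (hθ : ∀ k, k < N → θ k = ∏ i ∈ Finset.Icc 1 k, lam / (nu i + lam))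
    (hθm : θ N = (lam / num) * θ (N - 1))
    (hθr : θ (N + 1) = (nu 0 + lam) / nur - (num / nur) * θ N) :
    ∀ m, m < N + 2 → ∑ k ∈ Finset.range (N + 2), θ k * Q k m = 0 := by
  have hθ0 : θ 0 = 1 := by
    rw [hθ 0 hN]; simp
  have hrec : ∀ k, 1 ≤ k → k < N → θ k * (nu k + lam) = θ (k - 1) * lam := by
    intro k hk1 hkN
    obtain ⟨j, rfl⟩ : ∃ j, k = j + 1 := ⟨k - 1, by omega⟩
    have hpos : 0 < nu (j + 1) + lam := by
      have := hnu (j + 1) hkN; linarith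
    rw [hθ (j + 1) hkN, Finset.prod_Icc_succ_top (by omega : 1 ≤ j + 1),
      ← hθ j (by omega)]
    simp only [Nat.add_sub_cancel]
    field_simp
  -- key relations
  have hmθ : num * θ N = lam * θ (N - 1) := by
    rw [hθm]; field_simp
  have hrθ : nur * θ (N + 1) = nu 0 + lam - num * θ N := by
    rw [hθr]; field_simp
  have key : ∀ n, 1 ≤ n → n ≤ N →
      ∑ k ∈ Finset.range n, θ k * nu k = nu 0 + lam - lam * θ (n - 1) := by
    intro n
    induction n with
    | zero => omega
    | succ j ih =>
      intro _ hle
      rcases Nat.eq_zero_or_pos j with hj | hj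
      · subst hj; simp [hθ0]
      · rw [Finset.sum_range_succ, ih hj (by omega)]
        have h := hrec j hj (by omega)
        simp only [Nat.add_sub_cancel]
        nlinarith [h]
  intro m hm
  rcases (by omega : m = 0 ∨ (1 ≤ m ∧ m < N) ∨ m = N ∨ m = N + 1) with
    rfl | ⟨hm1, hmN⟩ | hmeq | hmeq
  · -- column 0
    have hsub : ({0, N, N + 1} : Finset ℕ) ⊆ Finset.range (N + 2) := by
      intro x hx; simp at hx; rcases hx with rfl | rfl | rfl <;> simp <;> omega
    rw [← Finset.sum_subset hsub (by
      intro k hk hk'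
      simp at hk hk'
      rcases (by omega : k < N ∨ k = N ∨ k = N + 1) with h | rfl | rfl
      · rw [hQ_zero k 0 h (by omega) (by omega) (by omega)]; ring
      · exact absurd rfl hk'.2.1
      · exact absurd rfl hk'.2.2)]
    have h01 : (0 : ℕ) ∉ ({N, N + 1} : Finset ℕ) := by simp; omega
    have h02 : N ∉ ({N + 1} : Finset ℕ) := by simp
    rw [show ({0, N, N + 1} : Finset ℕ) = insert 0 (insert N {N + 1}) from rfl,
      Finset.sum_insert h01, Finset.sum_insert h02, Finset.sum_singleton,
      hQ_diag 0 hN, hQ_m0, hQ_r0, hθ0]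
    nlinarith [hrθ]
  · -- column m, 1 ≤ m < N
    have hsub : ({m - 1, m} : Finset ℕ) ⊆ Finset.range (N + 2) := by
      intro x hx; simp at hx; rcases hx with rfl | rfl <;> simp <;> omega
    rw [← Finset.sum_subset hsub (by
      intro k hk hk'
      simp at hk hk'
      rcases (by omega : k < N ∨ k = N ∨ k = N + 1) with h | rfl | rfl
      · rw [hQ_zero k m h (by omega) (by omega) (by omega)]; ring
      · rw [hQ_mz m (by omega) (by omega)]; ring
      · rw [hQ_rz m (by omega) (by omega)]; ring)]
    rw [Finset.sum_pair (by omega : m - 1 ≠ m)]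
    have hup : Q (m - 1) m = lam := by
      have := hQ_up (m - 1) (by omega)
      rwa [show m - 1 + 1 = m by omega] at this
    rw [hup, hQ_diag m hmN]
    have h := hrec m hm1 hmN
    nlinarith [h]
  · -- column N
    rw [hmeq]
    have hsub : ({N - 1, N} : Finset ℕ) ⊆ Finset.range (N + 2) := by
      intro x hx; simp at hx; rcases hx with rfl | rfl <;> simp <;> omega
    rw [← Finset.sum_subset hsub (by
      intro k hk hk'
      simp at hk hk'
      rcases (by omega : k < N ∨ k = N ∨ k = N + 1) with h | rfl | rfl
      · rw [hQ_zero k N h (by omega) (by omega) (by omega)]; ring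
      · exact absurd rfl hk'.2
      · rw [hQ_rz N (by omega) (by omega)]; ring)]
    rw [Finset.sum_pair (by omega : N - 1 ≠ N)]
    have hup : Q (N - 1) N = lam := by
      have := hQ_up (N - 1) (by omega)
      rwa [show N - 1 + 1 = N by omega] at this
    rw [hup, hQ_mm]
    nlinarith [hmθ]
  · -- column N + 1
    rw [hmeq]
    rw [show N + 2 = (N + 1) + 1 from rfl, Finset.sum_range_succ,
      Finset.sum_range_succ, hQ_rr, hQ_mz (N + 1) (by omega) (by omega)]
    have hcong : ∑ k ∈ Finset.range N, θ k * Q k (N + 1)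
        = ∑ k ∈ Finset.range N, θ k * nu k := by
      apply Finset.sum_congr rfl
      intro k hk
      rw [hQ_fail k (Finset.mem_range.mp hk)]
    rw [hcong, key N hN le_rfl]
    nlinarith [hrθ, hmθ]
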